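/- Let p_L denote the number of self-avoiding polygons of length L on the hexagonal lattice, counted modulo translation. Then for all L, M one has p_{L+M-2} ≥ p_L · p_M. -/

import Mathlib

/-- The hexagonal (honeycomb) lattice in its "brick wall" representation on `ℤ × ℤ`:
all horizontal edges `(x,y)–(x+1,y)` and the vertical edges `(x,y)–(x,y+1)` with
`x + y` even. -/
def HexLattice : SimpleGraph (ℤ × ℤ) :=
  SimpleGraph.fromRel (fun p q =>
    (p.2 = q.2 ∧ q.1 = p.1 + 1) ∨ (p.1 = q.1 ∧ q.2 = p.2 + 1 ∧ Even (p.1 + p.2)))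

/-- `S` is (the edge set of) a self-avoiding polygon of length `L` on the hexagonal
lattice: the edge set of a cycle with `L` edges. -/
def IsSAP (L : ℕ) (S : Set (Sym2 (ℤ × ℤ))) : Prop :=
  ∃ (v : ℤ × ℤ) (w : HexLattice.Walk v v), w.IsCycle ∧ w.length = L ∧ S = {e | e ∈ w.edges}

/-- Translation of an edge set of the lattice by a lattice vector `t`. -/
def translateEdges (t : ℤ × ℤ) (S : Set (Sym2 (ℤ × ℤ))) : Set (Sym2 (ℤ × ℤ)) :=
  (Sym2.map (fun p => p + t)) '' S

/-- The number `p_L` of self-avoiding polygons of length `L` on the hexagonal lattice,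
counted modulo translation. -/
noncomputable def hexSAPCount (L : ℕ) : ℕ :=
  Nat.card (Quot (fun S S' : {S // IsSAP L S} => ∃ t : ℤ × ℤ, translateEdges t S.1 = S'.1))

open SimpleGraph

namespace HexSAP

/-- Adjacency unfolding. -/
lemma hex_adj {p q : ℤ × ℤ} : HexLattice.Adj p q ↔ p ≠ q ∧
    ((p.2 = q.2 ∧ q.1 = p.1 + 1) ∨ (p.1 = q.1 ∧ q.2 = p.2 + 1 ∧ Even (p.1 + p.2)) ∨
     (q.2 = p.2 ∧ p.1 = q.1 + 1) ∨ (q.1 = p.1 ∧ p.2 = q.2 + 1 ∧ Even (q.1 + q.2))) := by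
  unfold HexLattice
  rw [SimpleGraph.fromRel_adj]
  tauto

lemma hex_adj_cases {p q : ℤ × ℤ} (h : HexLattice.Adj p q) :
    q = (p.1 + 1, p.2) ∨ q = (p.1 - 1, p.2) ∨
    (q = (p.1, p.2 + 1) ∧ Even (p.1 + p.2)) ∨ (q = (p.1, p.2 - 1) ∧ Even (p.1 + p.2 - 1)) := by
  rw [hex_adj] at h
  simp only [Int.even_iff, Prod.ext_iff] at *
  obtain ⟨-, h | h | h | h⟩ := h
  · left; omega
  · right; right; left; omega
  · right; left; omega
  · right; right; right; omega

lemma hex_adj_right {p : ℤ × ℤ} : HexLattice.Adj p (p.1 + 1, p.2) := by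
  rw [hex_adj]
  constructor
  · intro h; rw [Prod.ext_iff] at h; simp at h
  · exact Or.inl ⟨rfl, rfl⟩

lemma hex_adj_up {p : ℤ × ℤ} (h : Even (p.1 + p.2)) : HexLattice.Adj p (p.1, p.2 + 1) := by
  rw [hex_adj]
  constructor
  · intro hh; rw [Prod.ext_iff] at hh; simp at hh
  · exact Or.inr (Or.inl ⟨rfl, rfl, h⟩)

lemma hex_adj_translate {t p q : ℤ × ℤ} (ht : Even (t.1 + t.2)) (h : HexLattice.Adj p q) :
    HexLattice.Adj (p + t) (q + t) := by
  rw [hex_adj] at h ⊢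
  simp only [Int.even_iff, Prod.ext_iff, Prod.fst_add, Prod.snd_add, ne_eq] at *
  obtain ⟨hne, h⟩ := h
  refine ⟨by omega, ?_⟩
  obtain h | h | h | h := h
  · left; omega
  · right; left; omega
  · right; right; left; omega
  · right; right; right; omega


/-- Translation by an even vector as a graph isomorphism. -/
def hexT (t : ℤ × ℤ) (ht : Even (t.1 + t.2)) : HexLattice ≃g HexLattice where
  toEquiv := Equiv.addRight t
  map_rel_iff' := by
    intro p q
    constructor
    · intro h
      have h2 := hex_adj_translate (t := -t) (by
        rcases ht with ⟨r, hr⟩; exact ⟨-r, by simp [Prod.fst_neg, Prod.snd_neg]; omega⟩) h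
      simpa using h2
    · exact hex_adj_translate ht

@[simp] lemma hexT_apply (t : ℤ × ℤ) (ht) (p : ℤ × ℤ) : hexT t ht p = p + t := rfl

lemma translateEdges_comp (s t : ℤ × ℤ) (S : Set (Sym2 (ℤ × ℤ))) :
    translateEdges s (translateEdges t S) = translateEdges (t + s) S := by
  unfold translateEdges
  rw [← Set.image_comp]
  have h1 : ((Sym2.map fun p : ℤ × ℤ => p + s) ∘ Sym2.map fun p : ℤ × ℤ => p + t) =
      Sym2.map fun p : ℤ × ℤ => p + (t + s) := by
    funext x
    rw [Function.comp_apply, Sym2.map_map]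
    congr 1
    funext p
    simp [Function.comp, add_assoc]
  rw [h1]

@[simp] lemma translateEdges_zero (S : Set (Sym2 (ℤ × ℤ))) : translateEdges 0 S = S := by
  have h1 : (fun p : ℤ × ℤ => p + 0) = id := by funext p; simp
  unfold translateEdges
  rw [h1, Sym2.map_id, Set.image_id]

lemma translateEdges_injective (t : ℤ × ℤ) : Function.Injective (Sym2.map (fun p : ℤ × ℤ => p + t)) :=
  Sym2.map.injective (fun a b h => by simpa using congrArg (fun z => z - t) h)

lemma translateEdges_union (t : ℤ × ℤ) (S T : Set (Sym2 (ℤ × ℤ))) :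
    translateEdges t (S ∪ T) = translateEdges t S ∪ translateEdges t T :=
  Set.image_union _ _ _

lemma translateEdges_diff (t : ℤ × ℤ) (S T : Set (Sym2 (ℤ × ℤ))) :
    translateEdges t (S \ T) = translateEdges t S \ translateEdges t T :=
  Set.image_diff (translateEdges_injective t) _ _

lemma rel_of_eqvGen {L : ℕ} {S S' : {S // IsSAP L S}}
    (h : Relation.EqvGen (fun S S' : {S // IsSAP L S} => ∃ t : ℤ × ℤ, translateEdges t S.1 = S'.1) S S') :
    ∃ t : ℤ × ℤ, translateEdges t S.1 = S'.1 := by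
  induction h with
  | rel a b hab => exact hab
  | refl a => exact ⟨0, translateEdges_zero _⟩
  | symm a b hab ih =>
      obtain ⟨t, ht⟩ := ih
      exact ⟨-t, by rw [← ht, translateEdges_comp]; simp⟩
  | trans a b c hab hbc ih1 ih2 =>
      obtain ⟨t1, ht1⟩ := ih1
      obtain ⟨t2, ht2⟩ := ih2
      exact ⟨t1 + t2, by rw [← ht2, ← ht1, translateEdges_comp]⟩

lemma isSAP_translate {L : ℕ} {S : Set (Sym2 (ℤ × ℤ))} (h : IsSAP L S) {t : ℤ × ℤ}
    (ht : Even (t.1 + t.2)) : IsSAP L (translateEdges t S) := by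
  obtain ⟨v, w, hc, hl, hS⟩ := h
  refine ⟨v + t, w.map (hexT t ht).toHom, ?_, ?_, ?_⟩
  · exact (SimpleGraph.Walk.map_isCycle_iff_of_injective (hexT t ht).injective).2 hc
  · exact (SimpleGraph.Walk.length_map _ _).trans hl
  · change translateEdges t S = {e | e ∈ (w.map (hexT t ht).toHom).edges}
    rw [SimpleGraph.Walk.edges_map, hS]
    ext x
    simp only [Set.mem_setOf_eq, List.mem_map, translateEdges, Set.mem_image]
    constructor
    · rintro ⟨a, ha, rfl⟩; exact ⟨a, ha, rfl⟩
    · rintro ⟨a, ha, rfl⟩; exact ⟨a, ha, rfl⟩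

/-- The vertex set of an edge set. -/
def vertsOf (S : Set (Sym2 (ℤ × ℤ))) : Set (ℤ × ℤ) := {p | ∃ e ∈ S, p ∈ e}

lemma sym2_mem_finite (e : Sym2 (ℤ × ℤ)) : {p | p ∈ e}.Finite := by
  induction e with
  | _ a b =>
      have : {p | p ∈ s(a, b)} = {a, b} := by
        ext p; simp [Sym2.mem_iff]
      rw [this]; exact (Set.finite_singleton b).insert a

lemma vertsOf_finite {S : Set (Sym2 (ℤ × ℤ))} (hS : S.Finite) : (vertsOf S).Finite := by
  have : vertsOf S = ⋃ e ∈ S, {p | p ∈ e} := by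
    ext p; simp [vertsOf]
  rw [this]
  exact Set.Finite.biUnion hS (fun e _ => sym2_mem_finite e)

lemma vertsOf_translate (t : ℤ × ℤ) (S : Set (Sym2 (ℤ × ℤ))) :
    vertsOf (translateEdges t S) = (fun p => p + t) '' vertsOf S := by
  ext p
  simp only [vertsOf, translateEdges, Set.mem_setOf_eq, Set.mem_image]
  constructor
  · rintro ⟨e, ⟨a, ha, rfl⟩, hp⟩
    rw [Sym2.mem_map] at hp
    obtain ⟨q, hq, rfl⟩ := hp
    exact ⟨q, ⟨a, ha, hq⟩, rfl⟩
  · rintro ⟨q, ⟨e, he, hq⟩, rfl⟩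
    exact ⟨Sym2.map _ e, ⟨e, he, rfl⟩, Sym2.mem_map.2 ⟨q, hq, rfl⟩⟩


section Generic

variable {V : Type*} [DecidableEq V] {G : SimpleGraph V}

open SimpleGraph.Walk

lemma mem_support_of_mem_edges' {u v x : V} (p : G.Walk u v) {e : Sym2 V}
    (he : e ∈ p.edges) (hx : x ∈ e) : x ∈ p.support := by
  induction e with
  | _ a b =>
      rcases Sym2.mem_iff.1 hx with rfl | rfl
      · exact p.fst_mem_support_of_mem_edges he
      · exact p.snd_mem_support_of_mem_edges he

lemma length_rotate' {u v : V} (c : G.Walk v v) (h : u ∈ c.support) :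
    (c.rotate _ h).length = c.length := by
  rw [Walk.rotate, Walk.length_append, add_comm, ← Walk.length_append, Walk.take_spec]

lemma closed_mem_tail {a : V} (c : G.Walk a a) (h : ¬c.Nil) : a ∈ c.support.tail := by
  cases c with
  | nil => exact absurd Walk.nil_nil h
  | cons h' q => simpa using q.end_mem_support

/-- In a path, an edge containing the initial vertex is the first edge. -/
lemma path_first_edge {u v : V} (p : G.Walk u v) (hp : p.support.Nodup)
    {e : Sym2 V} (he : e ∈ p.edges) (hu : u ∈ e) :
    ∃ (x : V) (h : G.Adj u x) (r : G.Walk x v), p = Walk.cons h r ∧ e = s(u, x) := by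
  cases p with
  | nil => simp at he
  | cons h r =>
      rename_i b
      by_cases hh : e = s(u, b)
      · exact ⟨b, h, r, rfl, hh⟩
      · exfalso
        have he' : e ∈ r.edges := by
          have he2 : e = s(u, b) ∨ e ∈ r.edges := by
            have h3 := he
            rw [Walk.edges_cons] at h3
            exact List.mem_cons.1 h3
          rcases he2 with h1 | h1
          · exact absurd h1 hh
          · exact h1
        have hu' : u ∈ r.support := mem_support_of_mem_edges' r he' hu
        have : u ∉ r.support := by
          have := hp
          rw [Walk.support_cons] at this
          exact (List.nodup_cons.1 this).1
        exact this hu'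

/-- Splitting a cycle at one of its edges yields a path with the complementary
edges. -/
lemma cycle_split {v a b : V} {w : G.Walk v v} (hc : w.IsCycle)
    {e : Sym2 V} (hew : e ∈ w.edges) (heab : e = s(a, b)) :
    ∃ p : G.Walk b a, p.support.Nodup ∧ p.edges.Nodup ∧ e ∉ p.edges ∧
      p.length + 1 = w.length ∧
      (∀ x, x ∈ p.edges ↔ (x ∈ w.edges ∧ x ≠ e)) ∧
      (∀ y, y ∈ p.support ↔ y ∈ w.support) := by
  have hav : a ∈ w.support := mem_support_of_mem_edges' w hew (by rw [heab]; simp)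
  set c := w.rotate _ hav with hcdef
  have hcc : c.IsCycle := hc.rotate hav
  have hce : c.edges ~r w.edges := w.rotate_edges _ hav
  have hcmem : ∀ x, x ∈ c.edges ↔ x ∈ w.edges := fun x => hce.perm.mem_iff
  have hcsup : ∀ y, y ∈ c.support ↔ y ∈ w.support := by
    intro y
    have h1 : (c.support.tail : List V) ~r w.support.tail := w.support_rotate _ hav
    have hnilc : ¬c.Nil := hcc.not_nil
    have hnilw : ¬w.Nil := hc.not_nil
    rw [Walk.support_eq_cons c, Walk.support_eq_cons w]
    simp only [List.mem_cons]
    constructor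
    · rintro (rfl | hy)
      · have : y ∈ c.support.tail := closed_mem_tail c hnilc
        have : y ∈ w.support.tail := h1.perm.mem_iff.1 this
        exact Or.inr this
      · exact Or.inr (h1.perm.mem_iff.1 hy)
    · rintro (rfl | hy)
      · exact Or.inr (h1.perm.symm.mem_iff.1 (closed_mem_tail w hnilw))
      · exact Or.inr (h1.perm.symm.mem_iff.1 hy)
  have hlen : c.length = w.length := length_rotate' w hav
  have hec : e ∈ c.edges := (hcmem e).2 hew
  clear_value c
  cases c with
  | nil => exact absurd hcc Walk.IsCycle.not_of_nil
  | cons hadj q =>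
      rename_i b₀
      obtain ⟨hqp, hqe⟩ := (Walk.cons_isCycle_iff q hadj).1 hcc
      by_cases hcase : e = s(a, b₀)
      · -- e is the first edge of the rotated cycle
        have hbb : b = b₀ := by
          rw [heab] at hcase
          rcases Sym2.eq_iff.1 hcase with ⟨-, h2⟩ | ⟨h1, -⟩
          · exact h2
          · exact absurd h1 hadj.ne
        subst hbb
        refine ⟨q, hqp.support_nodup, hqp.isTrail.edges_nodup, hcase ▸ hqe, ?_, ?_, ?_⟩
        · simpa using hlen
        · intro x
          constructor
          · intro hx
            refine ⟨(hcmem x).1 (by simp [hx]), ?_⟩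
            rintro rfl; exact (hcase ▸ hqe) hx
          · rintro ⟨hx, hxe⟩
            have := (hcmem x).2 hx
            rcases (by simpa using this : x = s(a, b) ∨ x ∈ q.edges) with rfl | h
            · exact absurd heab.symm hxe
            · exact h
          -- note: careful with s(a,b) vs s(a,b₀)
        · intro y
          rw [← hcsup y]
          simp only [Walk.support_cons, List.mem_cons]
          constructor
          · exact fun h => Or.inr h
          · rintro (rfl | h)
            · exact q.end_mem_support
            · exact h
      · -- e is inside q
        have heq : e ∈ q.edges := by
          rcases (by simpa using hec : e = s(a, b₀) ∨ e ∈ q.edges) with h | h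
          · exact absurd h hcase
          · exact h
        have hqr : q.reverse.support.Nodup := by
          rw [Walk.support_reverse]; exact List.nodup_reverse.2 hqp.support_nodup
        have herev : e ∈ q.reverse.edges := by rw [Walk.edges_reverse]; simpa using heq
        obtain ⟨x, hax, r', hqrev, hex⟩ := path_first_edge q.reverse hqr herev (by rw [heab]; simp)
        have hxb : x = b := by
          rw [heab] at hex
          rcases Sym2.eq_iff.1 hex with ⟨-, h2⟩ | ⟨h1, -⟩
          · exact h2.symm
          · exact absurd h1 hax.ne
        subst hxb
        -- p := r' ++ [edge b₀ → a]
        have hrs : q.reverse.support = a :: r'.support := by rw [hqrev, Walk.support_cons]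
        have hrsn : a ∉ r'.support ∧ r'.support.Nodup := by
          have := hqr
          rw [hrs] at this
          exact ⟨(List.nodup_cons.1 this).1, (List.nodup_cons.1 this).2⟩
        have hre : q.reverse.edges = e :: r'.edges := by
          rw [hqrev, Walk.edges_cons, ← hex]
        have hqmem : ∀ x, x ∈ q.edges ↔ (x = e ∨ x ∈ r'.edges) := by
          intro x
          rw [← List.mem_reverse, ← Walk.edges_reverse, hre, List.mem_cons]
        have hren : e ∉ r'.edges ∧ r'.edges.Nodup := by
          have h4 : q.reverse.edges.Nodup := by
            rw [Walk.edges_reverse]; exact List.nodup_reverse.2 hqp.isTrail.edges_nodup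
          rw [hre] at h4
          exact ⟨(List.nodup_cons.1 h4).1, (List.nodup_cons.1 h4).2⟩
        have hba : s(b₀, a) = s(a, b₀) := Sym2.eq_swap
        have hbae : s(b₀, a) ∉ r'.edges := fun hmem =>
          hqe (hba ▸ (hqmem s(b₀, a)).2 (Or.inr hmem))
        have hps : (r'.append (Walk.cons hadj.symm Walk.nil)).support = r'.support ++ [a] := by
          rw [Walk.support_append]
          simp
        have hpe : (r'.append (Walk.cons hadj.symm Walk.nil)).edges = r'.edges ++ [s(b₀, a)] := by
          rw [Walk.edges_append]
          simp
        have hql : q.length = r'.length + 1 := by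
          have h5 : q.reverse.length = r'.length + 1 := by rw [hqrev]; simp
          rw [Walk.length_reverse] at h5
          exact h5
        have hcl : q.length + 1 = w.length := by
          rw [← hlen]; simp
        refine ⟨r'.append (Walk.cons hadj.symm Walk.nil), ?_, ?_, ?_, ?_, ?_, ?_⟩
        · rw [hps]
          rw [List.nodup_append]
          exact ⟨hrsn.2, List.nodup_singleton a, fun y hy z hy2 hyz => by
            rw [List.mem_singleton] at hy2; subst hy2; subst hyz; exact hrsn.1 hy⟩
        · rw [hpe, List.nodup_append]
          exact ⟨hren.2, List.nodup_singleton _, fun y hy z hy2 hyz => by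
            rw [List.mem_singleton] at hy2; subst hy2; subst hyz; exact hbae hy⟩
        · rw [hpe]
          intro hmem
          rcases List.mem_append.1 hmem with h | h
          · exact hren.1 h
          · rw [List.mem_singleton] at h
            exact hcase (by rw [h, hba])
        · rw [Walk.length_append]
          simp only [Walk.length_cons, Walk.length_nil]
          omega
        · intro x
          rw [hpe, List.mem_append, List.mem_singleton]
          have hwc : x ∈ w.edges ↔ (x = s(a, b₀) ∨ x ∈ q.edges) := by
            rw [← hcmem x, Walk.edges_cons, List.mem_cons]
          constructor
          · rintro (h | rfl)
            · refine ⟨hwc.2 (Or.inr ((hqmem x).2 (Or.inr h))), fun hh => hren.1 (hh ▸ h)⟩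
            · refine ⟨hwc.2 (Or.inl hba), fun hh => hcase (by rw [← hh, hba])⟩
          · rintro ⟨hx, hxe⟩
            rcases hwc.1 hx with rfl | h
            · right; rw [hba]
            · rcases (hqmem x).1 h with rfl | h2
              · exact absurd rfl hxe
              · exact Or.inl h2
        · intro y
          rw [hps, List.mem_append, List.mem_singleton, ← hcsup y, Walk.support_cons,
            List.mem_cons]
          have hqs : y ∈ q.support ↔ (y = a ∨ y ∈ r'.support) := by
            rw [← List.mem_reverse, ← Walk.support_reverse, hrs, List.mem_cons]
          constructor
          · rintro (h | rfl)
            · exact Or.inr (hqs.2 (Or.inr h))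
            · exact Or.inl rfl
          · rintro (rfl | h)
            · right; rfl
            · rcases hqs.1 h with rfl | h2
              · right; rfl
              · exact Or.inl h2


/-- Every vertex of a cycle is contained in two distinct edges of the cycle. -/
lemma two_edges_at {v u : V} {w : G.Walk v v} (hc : w.IsCycle) (hu : u ∈ w.support) :
    ∃ e₁ e₂ : Sym2 V, e₁ ∈ w.edges ∧ e₂ ∈ w.edges ∧ e₁ ≠ e₂ ∧ u ∈ e₁ ∧ u ∈ e₂ := by
  set c := w.rotate _ hu with hcdef
  have hcc : c.IsCycle := hc.rotate hu
  have hcmem : ∀ x, x ∈ c.edges ↔ x ∈ w.edges := fun x => (w.rotate_edges _ hu).perm.mem_iff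
  clear_value c
  cases c with
  | nil => exact absurd hcc Walk.IsCycle.not_of_nil
  | cons hadj q =>
      rename_i b₀
      obtain ⟨hqp, hqe⟩ := (Walk.cons_isCycle_iff q hadj).1 hcc
      have hnn : ¬q.reverse.Nil := by
        rw [Walk.nil_iff_length_eq, Walk.length_reverse]
        intro h0
        have h3 := hcc.three_le_length
        simp [h0] at h3
      obtain ⟨x₂, h₂, r₂, hq2⟩ := Walk.not_nil_iff.1 hnn
      refine ⟨s(u, b₀), s(u, x₂), (hcmem _).1 (by simp), (hcmem _).1 ?_, ?_, by simp, by simp⟩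
      · have : s(u, x₂) ∈ q.edges := by
          rw [← List.mem_reverse, ← Walk.edges_reverse, hq2, Walk.edges_cons]
          exact List.mem_cons_self
        rw [Walk.edges_cons]
        exact List.mem_cons_of_mem _ this
      · intro hh
        apply hqe
        rw [hh, ← List.mem_reverse, ← Walk.edges_reverse, hq2, Walk.edges_cons]
        exact List.mem_cons_self

/-- Surgery: combining two cycles that share exactly one edge and its endpoints. -/
lemma cycle_surgery {v₁ v₂ a b : V} {w₁ : G.Walk v₁ v₁} {w₂ : G.Walk v₂ v₂}
    (hc₁ : w₁.IsCycle) (hc₂ : w₂.IsCycle) (hab : G.Adj a b)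
    (he₁ : s(a, b) ∈ w₁.edges) (he₂ : s(a, b) ∈ w₂.edges)
    (hV : ∀ y, y ∈ w₁.support → y ∈ w₂.support → y = a ∨ y = b) :
    ∃ W : G.Walk a a, W.IsCycle ∧ W.length + 2 = w₁.length + w₂.length ∧
      (∀ x, x ∈ W.edges ↔ ((x ∈ w₁.edges ∨ x ∈ w₂.edges) ∧ x ≠ s(a, b))) := by
  obtain ⟨p₁, hp₁n, hp₁en, hp₁e, hp₁l, hp₁mem, hp₁sup⟩ := cycle_split hc₁ he₁ rfl
  obtain ⟨p₂, hp₂n, hp₂en, hp₂e, hp₂l, hp₂mem, hp₂sup⟩ :=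
    cycle_split hc₂ he₂ Sym2.eq_swap
  -- p₁ : Walk b a  (from w₁),  p₂ : Walk a b (from w₂)
  refine ⟨p₂.append p₁, ?_, ?_, ?_⟩
  · rw [Walk.isCycle_def]
    refine ⟨(Walk.isTrail_def _).2 ?_, ?_, ?_⟩
    · rw [Walk.edges_append, List.nodup_append]
      refine ⟨hp₂en, hp₁en, ?_⟩
      intro x hx₂ x' hx₁ hxx
      subst hxx
      have h1 := (hp₁mem x).1 hx₁
      have h2 := (hp₂mem x).1 hx₂
      have hxG : x ∈ G.edgeSet := w₁.edges_subset_edgeSet h1.1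
      have hdiag := G.not_isDiag_of_mem_edgeSet hxG
      induction x with
      | _ c d =>
          have hcmem : c = a ∨ c = b := by
            apply hV c (mem_support_of_mem_edges' w₁ h1.1 (by simp))
              (mem_support_of_mem_edges' w₂ h2.1 (by simp))
          have hdmem : d = a ∨ d = b := by
            apply hV d (mem_support_of_mem_edges' w₁ h1.1 (by simp))
              (mem_support_of_mem_edges' w₂ h2.1 (by simp))
          have hcd : c ≠ d := by simpa using hdiag
          rcases hcmem with rfl | rfl <;> rcases hdmem with rfl | rfl
          · exact hcd rfl
          · exact h1.2 rfl
          · exact h1.2 Sym2.eq_swap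
          · exact hcd rfl
    · intro hnil
      have := congrArg Walk.length hnil
      rw [Walk.length_append] at this
      simp only [Walk.length_nil] at this
      have h3 := hc₁.three_le_length
      omega
    · have hsup : (p₂.append p₁).support.tail = p₂.support.tail ++ p₁.support.tail := by
        rw [Walk.support_append, Walk.support_eq_cons p₂]
        simp
      rw [hsup, List.nodup_append]
      refine ⟨hp₂n.tail, hp₁n.tail, ?_⟩
      intro y hy₂ y' hy₁ hyy
      subst hyy
      have hy₂' : y ∈ w₂.support := (hp₂sup y).1 (List.mem_of_mem_tail hy₂)
      have hy₁' : y ∈ w₁.support := (hp₁sup y).1 (List.mem_of_mem_tail hy₁)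
      rcases hV y hy₁' hy₂' with rfl | rfl
      · have : y ∉ p₂.support.tail := by
          have := hp₂n
          rw [Walk.support_eq_cons p₂] at this
          exact (List.nodup_cons.1 this).1
        exact this hy₂
      · have : y ∉ p₁.support.tail := by
          have := hp₁n
          rw [Walk.support_eq_cons p₁] at this
          exact (List.nodup_cons.1 this).1
        exact this hy₁
  · rw [Walk.length_append]
    omega
  · intro x
    rw [Walk.edges_append, List.mem_append]
    constructor
    · rintro (h | h)
      · exact ⟨Or.inr ((hp₂mem x).1 h).1, fun hh => ((hp₂mem x).1 h).2 (by rw [hh, Sym2.eq_swap])⟩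
      · exact ⟨Or.inl ((hp₁mem x).1 h).1, ((hp₁mem x).1 h).2⟩
    · rintro ⟨h | h, hne⟩
      · exact Or.inr ((hp₁mem x).2 ⟨h, hne⟩)
      · exact Or.inl ((hp₂mem x).2 ⟨h, fun hh => hne (by rw [hh, Sym2.eq_swap])⟩)

end Generic

lemma sap_finite {L : ℕ} {S : Set (Sym2 (ℤ × ℤ))} (h : IsSAP L S) : S.Finite := by
  obtain ⟨v, w, -, -, rfl⟩ := h
  exact List.finite_toSet w.edges

lemma sap_three_le {L : ℕ} {S : Set (Sym2 (ℤ × ℤ))} (h : IsSAP L S) : 3 ≤ L := by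
  obtain ⟨v, w, hc, rfl, -⟩ := h
  exact hc.three_le_length

lemma sap_ncard {L : ℕ} {S : Set (Sym2 (ℤ × ℤ))} (h : IsSAP L S) : S.ncard = L := by
  obtain ⟨v, w, hc, rfl, rfl⟩ := h
  have h1 : {e | e ∈ w.edges} = (w.edges.toFinset : Set (Sym2 (ℤ × ℤ))) := by
    ext x; simp
  rw [h1, Set.ncard_coe_finset, List.toFinset_card_of_nodup hc.isTrail.edges_nodup,
    SimpleGraph.Walk.length_edges]

lemma verts_eq_support {L : ℕ} {v : ℤ × ℤ} {w : HexLattice.Walk v v} (hc : w.IsCycle)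
    (hl : w.length = L) :
    vertsOf {e | e ∈ w.edges} = {p | p ∈ w.support} := by
  ext p
  simp only [vertsOf, Set.mem_setOf_eq]
  constructor
  · rintro ⟨e, he, hp⟩
    exact mem_support_of_mem_edges' w he hp
  · intro hp
    obtain ⟨e₁, e₂, h1, h2, h3, h4, h5⟩ := two_edges_at hc hp
    exact ⟨e₁, h1, h4⟩

lemma sap_verts_finite {L : ℕ} {S : Set (Sym2 (ℤ × ℤ))} (h : IsSAP L S) :
    (vertsOf S).Finite := vertsOf_finite (sap_finite h)

lemma sap_verts_nonempty {L : ℕ} {S : Set (Sym2 (ℤ × ℤ))} (h : IsSAP L S) :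
    (vertsOf S).Nonempty := by
  obtain ⟨v, w, hc, hl, rfl⟩ := h
  rw [verts_eq_support hc hl]
  exact ⟨v, w.start_mem_support⟩

lemma sap_two_edges {L : ℕ} {S : Set (Sym2 (ℤ × ℤ))} (h : IsSAP L S) {u : ℤ × ℤ}
    (hu : u ∈ vertsOf S) :
    ∃ e₁ e₂, e₁ ∈ S ∧ e₂ ∈ S ∧ e₁ ≠ e₂ ∧ u ∈ e₁ ∧ u ∈ e₂ := by
  obtain ⟨v, w, hc, hl, rfl⟩ := h
  rw [verts_eq_support hc hl] at hu
  exact two_edges_at hc hu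

lemma sap_other_endpoint {S : Set (Sym2 (ℤ × ℤ))} {L : ℕ} (h : IsSAP L S) {e : Sym2 (ℤ × ℤ)}
    (he : e ∈ S) {u : ℤ × ℤ} (hu : u ∈ e) :
    ∃ q, e = s(u, q) ∧ HexLattice.Adj u q ∧ q ∈ vertsOf S := by
  have heE : e ∈ HexLattice.edgeSet := by
    obtain ⟨v, w, hc, hl, rfl⟩ := h
    exact w.edges_subset_edgeSet he
  induction e with
  | _ c d =>
      rcases Sym2.mem_iff.1 hu with rfl | rfl
      · exact ⟨d, rfl, HexLattice.mem_edgeSet.1 heE, ⟨s(u, d), he, by simp⟩⟩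
      · exact ⟨c, Sym2.eq_swap, (HexLattice.mem_edgeSet.1 heE).symm, ⟨s(c, u), he, by simp⟩⟩

/-- At the top vertex of the rightmost column, the polygon contains the downward
vertical edge and the leftward horizontal edge. -/
lemma topright_edges {L : ℕ} {S : Set (Sym2 (ℤ × ℤ))} (h : IsSAP L S) {u : ℤ × ℤ}
    (hu : u ∈ vertsOf S) (hmax : ∀ p ∈ vertsOf S, p.1 ≤ u.1)
    (htop : ∀ p ∈ vertsOf S, p.1 = u.1 → p.2 ≤ u.2) :
    s(u, (u.1, u.2 - 1)) ∈ S ∧ Even (u.1 + u.2 - 1) ∧ s(u, (u.1 - 1, u.2)) ∈ S := by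
  obtain ⟨e₁, e₂, h1, h2, hne, hu1, hu2⟩ := sap_two_edges h hu
  obtain ⟨q₁, rfl, ha1, hq1⟩ := sap_other_endpoint h h1 hu1
  obtain ⟨q₂, rfl, ha2, hq2⟩ := sap_other_endpoint h h2 hu2
  have hqq : q₁ ≠ q₂ := fun hh => hne (by rw [hh])
  have key : ∀ q', s(u, q') ∈ S → HexLattice.Adj u q' → q' ∈ vertsOf S →
      q' = (u.1 - 1, u.2) ∨ (q' = (u.1, u.2 - 1) ∧ Even (u.1 + u.2 - 1)) := by
    intro q' hS hadj hv
    rcases hex_adj_cases hadj with rfl | rfl | ⟨rfl, hev⟩ | ⟨rfl, hev⟩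
    · exact absurd (hmax _ hv) (by simp)
    · exact Or.inl rfl
    · exact absurd (htop _ hv rfl) (by simp)
    · exact Or.inr ⟨rfl, hev⟩
  rcases key q₁ h1 ha1 hq1 with rfl | ⟨rfl, hev⟩ <;>
    rcases key q₂ h2 ha2 hq2 with rfl | ⟨rfl, hev₂⟩
  · exact absurd rfl hqq
  · exact ⟨h2, hev₂, h1⟩
  · exact ⟨h1, hev, h2⟩
  · exact absurd rfl hqq

/-- At the bottom vertex of the leftmost column, the polygon contains the upward
vertical edge and the rightward horizontal edge. -/
lemma botleft_edges {L : ℕ} {S : Set (Sym2 (ℤ × ℤ))} (h : IsSAP L S) {u : ℤ × ℤ}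
    (hu : u ∈ vertsOf S) (hmin : ∀ p ∈ vertsOf S, u.1 ≤ p.1)
    (hbot : ∀ p ∈ vertsOf S, p.1 = u.1 → u.2 ≤ p.2) :
    s(u, (u.1, u.2 + 1)) ∈ S ∧ Even (u.1 + u.2) ∧ s(u, (u.1 + 1, u.2)) ∈ S := by
  obtain ⟨e₁, e₂, h1, h2, hne, hu1, hu2⟩ := sap_two_edges h hu
  obtain ⟨q₁, rfl, ha1, hq1⟩ := sap_other_endpoint h h1 hu1
  obtain ⟨q₂, rfl, ha2, hq2⟩ := sap_other_endpoint h h2 hu2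
  have hqq : q₁ ≠ q₂ := fun hh => hne (by rw [hh])
  have key : ∀ q', s(u, q') ∈ S → HexLattice.Adj u q' → q' ∈ vertsOf S →
      q' = (u.1 + 1, u.2) ∨ (q' = (u.1, u.2 + 1) ∧ Even (u.1 + u.2)) := by
    intro q' hS hadj hv
    rcases hex_adj_cases hadj with rfl | rfl | ⟨rfl, hev⟩ | ⟨rfl, hev⟩
    · exact Or.inl rfl
    · exact absurd (hmin _ hv) (by simp)
    · exact Or.inr ⟨rfl, hev⟩
    · exact absurd (hbot _ hv rfl) (by simp)
  rcases key q₁ h1 ha1 hq1 with rfl | ⟨rfl, hev⟩ <;>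
    rcases key q₂ h2 ha2 hq2 with rfl | ⟨rfl, hev₂⟩
  · exact absurd rfl hqq
  · exact ⟨h2, hev₂, h1⟩
  · exact ⟨h1, hev, h2⟩
  · exact absurd rfl hqq

/-- In the leftmost column, every vertex of the polygon is incident to its (unique)
vertical lattice edge inside the polygon. -/
lemma vertical_at_leftmost {L : ℕ} {S : Set (Sym2 (ℤ × ℤ))} (h : IsSAP L S) {u : ℤ × ℤ}
    (hu : u ∈ vertsOf S) (hmin : ∀ p ∈ vertsOf S, u.1 ≤ p.1) :
    (s(u, (u.1, u.2 + 1)) ∈ S ∧ Even (u.1 + u.2)) ∨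
    (s(u, (u.1, u.2 - 1)) ∈ S ∧ Even (u.1 + u.2 - 1)) := by
  obtain ⟨e₁, e₂, h1, h2, hne, hu1, hu2⟩ := sap_two_edges h hu
  obtain ⟨q₁, rfl, ha1, hq1⟩ := sap_other_endpoint h h1 hu1
  obtain ⟨q₂, rfl, ha2, hq2⟩ := sap_other_endpoint h h2 hu2
  have hqq : q₁ ≠ q₂ := fun hh => hne (by rw [hh])
  have key : ∀ q', s(u, q') ∈ S → HexLattice.Adj u q' → q' ∈ vertsOf S →
      q' = (u.1 + 1, u.2) ∨ (q' = (u.1, u.2 + 1) ∧ Even (u.1 + u.2)) ∨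
      (q' = (u.1, u.2 - 1) ∧ Even (u.1 + u.2 - 1)) := by
    intro q' hS hadj hv
    rcases hex_adj_cases hadj with rfl | rfl | ⟨rfl, hev⟩ | ⟨rfl, hev⟩
    · exact Or.inl rfl
    · exact absurd (hmin _ hv) (by simp)
    · exact Or.inr (Or.inl ⟨rfl, hev⟩)
    · exact Or.inr (Or.inr ⟨rfl, hev⟩)
  rcases key q₁ h1 ha1 hq1 with rfl | ⟨rfl, hev⟩ | ⟨rfl, hev⟩ <;>
    first
      | (exact Or.inl ⟨h1, hev⟩)
      | (exact Or.inr ⟨h1, hev⟩)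
      | (rcases key q₂ h2 ha2 hq2 with rfl | ⟨rfl, hev₂⟩ | ⟨rfl, hev₂⟩)
  · exact absurd rfl hqq
  · exact Or.inl ⟨h2, hev₂⟩
  · exact Or.inr ⟨h2, hev₂⟩

/-- Similarly in the rightmost column. -/
lemma vertical_at_rightmost {L : ℕ} {S : Set (Sym2 (ℤ × ℤ))} (h : IsSAP L S) {u : ℤ × ℤ}
    (hu : u ∈ vertsOf S) (hmax : ∀ p ∈ vertsOf S, p.1 ≤ u.1) :
    (s(u, (u.1, u.2 + 1)) ∈ S ∧ Even (u.1 + u.2)) ∨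
    (s(u, (u.1, u.2 - 1)) ∈ S ∧ Even (u.1 + u.2 - 1)) := by
  obtain ⟨e₁, e₂, h1, h2, hne, hu1, hu2⟩ := sap_two_edges h hu
  obtain ⟨q₁, rfl, ha1, hq1⟩ := sap_other_endpoint h h1 hu1
  obtain ⟨q₂, rfl, ha2, hq2⟩ := sap_other_endpoint h h2 hu2
  have hqq : q₁ ≠ q₂ := fun hh => hne (by rw [hh])
  have key : ∀ q', s(u, q') ∈ S → HexLattice.Adj u q' → q' ∈ vertsOf S →
      q' = (u.1 - 1, u.2) ∨ (q' = (u.1, u.2 + 1) ∧ Even (u.1 + u.2)) ∨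
      (q' = (u.1, u.2 - 1) ∧ Even (u.1 + u.2 - 1)) := by
    intro q' hS hadj hv
    rcases hex_adj_cases hadj with rfl | rfl | ⟨rfl, hev⟩ | ⟨rfl, hev⟩
    · exact absurd (hmax _ hv) (by simp)
    · exact Or.inl rfl
    · exact Or.inr (Or.inl ⟨rfl, hev⟩)
    · exact Or.inr (Or.inr ⟨rfl, hev⟩)
  rcases key q₁ h1 ha1 hq1 with rfl | ⟨rfl, hev⟩ | ⟨rfl, hev⟩ <;>
    first
      | (exact Or.inl ⟨h1, hev⟩)
      | (exact Or.inr ⟨h1, hev⟩)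
      | (rcases key q₂ h2 ha2 hq2 with rfl | ⟨rfl, hev₂⟩ | ⟨rfl, hev₂⟩)
  · exact absurd rfl hqq
  · exact Or.inl ⟨h2, hev₂⟩
  · exact Or.inr ⟨h2, hev₂⟩

noncomputable def aPt (S : Set (Sym2 (ℤ × ℤ))) : ℤ × ℤ :=
  (sSup (Prod.fst '' vertsOf S), sSup {y | (sSup (Prod.fst '' vertsOf S), y) ∈ vertsOf S})

noncomputable def bPt (S : Set (Sym2 (ℤ × ℤ))) : ℤ × ℤ :=
  (sInf (Prod.fst '' vertsOf S), sInf {y | (sInf (Prod.fst '' vertsOf S), y) ∈ vertsOf S})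

section ExtremalPts

variable {S : Set (Sym2 (ℤ × ℤ))}

lemma yfinA (hfin : (vertsOf S).Finite) :
    {y | (sSup (Prod.fst '' vertsOf S), y) ∈ vertsOf S}.Finite := by
  apply (hfin.image Prod.snd).subset
  intro y hy
  exact ⟨_, hy, rfl⟩

lemma yfinB (hfin : (vertsOf S).Finite) :
    {y | (sInf (Prod.fst '' vertsOf S), y) ∈ vertsOf S}.Finite := by
  apply (hfin.image Prod.snd).subset
  intro y hy
  exact ⟨_, hy, rfl⟩

lemma aPt_mem (hfin : (vertsOf S).Finite) (hne : (vertsOf S).Nonempty) :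
    aPt S ∈ vertsOf S := by
  have hX : sSup (Prod.fst '' vertsOf S) ∈ Prod.fst '' vertsOf S :=
    (hne.image _).csSup_mem (hfin.image _)
  obtain ⟨p, hp, hpx⟩ := hX
  have hY : {y | (sSup (Prod.fst '' vertsOf S), y) ∈ vertsOf S}.Nonempty :=
    ⟨p.2, by rw [← hpx]; simpa using hp⟩
  exact hY.csSup_mem (yfinA hfin)

lemma aPt_maxx (hfin : (vertsOf S).Finite) : ∀ p ∈ vertsOf S, p.1 ≤ (aPt S).1 := fun p hp =>
  le_csSup (hfin.image Prod.fst).bddAbove ⟨p, hp, rfl⟩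

lemma aPt_maxy (hfin : (vertsOf S).Finite) :
    ∀ p ∈ vertsOf S, p.1 = (aPt S).1 → p.2 ≤ (aPt S).2 := by
  intro p hp hpx
  refine le_csSup (yfinA hfin).bddAbove ?_
  show (sSup (Prod.fst '' vertsOf S), p.2) ∈ vertsOf S
  have h2 : (sSup (Prod.fst '' vertsOf S), p.2) = p := by
    have : (aPt S).1 = sSup (Prod.fst '' vertsOf S) := rfl
    rw [this] at hpx
    exact Prod.ext hpx.symm rfl
  rw [h2]; exact hp

lemma aPt_unique (hfin : (vertsOf S).Finite) (hne : (vertsOf S).Nonempty)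
    {u : ℤ × ℤ} (hu : u ∈ vertsOf S) (h1 : ∀ p ∈ vertsOf S, p.1 ≤ u.1)
    (h2 : ∀ p ∈ vertsOf S, p.1 = u.1 → p.2 ≤ u.2) : u = aPt S := by
  have hx : u.1 = (aPt S).1 :=
    le_antisymm (aPt_maxx hfin u hu) (h1 _ (aPt_mem hfin hne))
  have hy : u.2 = (aPt S).2 :=
    le_antisymm (aPt_maxy hfin u hu hx) (h2 _ (aPt_mem hfin hne) hx.symm)
  exact Prod.ext hx hy

lemma bPt_mem (hfin : (vertsOf S).Finite) (hne : (vertsOf S).Nonempty) :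
    bPt S ∈ vertsOf S := by
  have hX : sInf (Prod.fst '' vertsOf S) ∈ Prod.fst '' vertsOf S :=
    (hne.image _).csInf_mem (hfin.image _)
  obtain ⟨p, hp, hpx⟩ := hX
  have hY : {y | (sInf (Prod.fst '' vertsOf S), y) ∈ vertsOf S}.Nonempty :=
    ⟨p.2, by rw [← hpx]; simpa using hp⟩
  exact hY.csInf_mem (yfinB hfin)

lemma bPt_minx (hfin : (vertsOf S).Finite) : ∀ p ∈ vertsOf S, (bPt S).1 ≤ p.1 := fun p hp =>
  csInf_le (hfin.image Prod.fst).bddBelow ⟨p, hp, rfl⟩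

lemma bPt_miny (hfin : (vertsOf S).Finite) :
    ∀ p ∈ vertsOf S, p.1 = (bPt S).1 → (bPt S).2 ≤ p.2 := by
  intro p hp hpx
  refine csInf_le (yfinB hfin).bddBelow ?_
  show (sInf (Prod.fst '' vertsOf S), p.2) ∈ vertsOf S
  have h2 : (sInf (Prod.fst '' vertsOf S), p.2) = p := by
    have : (bPt S).1 = sInf (Prod.fst '' vertsOf S) := rfl
    rw [this] at hpx
    exact Prod.ext hpx.symm rfl
  rw [h2]; exact hp

lemma bPt_unique (hfin : (vertsOf S).Finite) (hne : (vertsOf S).Nonempty)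
    {u : ℤ × ℤ} (hu : u ∈ vertsOf S) (h1 : ∀ p ∈ vertsOf S, u.1 ≤ p.1)
    (h2 : ∀ p ∈ vertsOf S, p.1 = u.1 → u.2 ≤ p.2) : u = bPt S := by
  have hx : u.1 = (bPt S).1 :=
    le_antisymm (h1 _ (bPt_mem hfin hne)) (bPt_minx hfin u hu)
  have hy : u.2 = (bPt S).2 :=
    le_antisymm (h2 _ (bPt_mem hfin hne) hx.symm) (bPt_miny hfin u hu hx)
  exact Prod.ext hx hy

lemma aPt_translate (hfin : (vertsOf S).Finite) (hne : (vertsOf S).Nonempty) (t : ℤ × ℤ) :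
    aPt (translateEdges t S) = aPt S + t := by
  have h1 : (vertsOf (translateEdges t S)).Finite := by
    rw [vertsOf_translate]; exact hfin.image _
  have h2 : (vertsOf (translateEdges t S)).Nonempty := by
    rw [vertsOf_translate]; exact hne.image _
  refine (aPt_unique h1 h2 ?_ ?_ ?_).symm
  · rw [vertsOf_translate]; exact ⟨aPt S, aPt_mem hfin hne, rfl⟩
  · intro p hp
    rw [vertsOf_translate] at hp
    obtain ⟨q, hq, rfl⟩ := hp
    have := aPt_maxx hfin q hq
    simp only [Prod.fst_add]
    omega
  · intro p hp hpx
    rw [vertsOf_translate] at hp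
    obtain ⟨q, hq, rfl⟩ := hp
    simp only [Prod.fst_add] at hpx
    have hq1 : q.1 = (aPt S).1 := by omega
    have := aPt_maxy hfin q hq hq1
    simp only [Prod.snd_add]
    omega

lemma bPt_translate (hfin : (vertsOf S).Finite) (hne : (vertsOf S).Nonempty) (t : ℤ × ℤ) :
    bPt (translateEdges t S) = bPt S + t := by
  have h1 : (vertsOf (translateEdges t S)).Finite := by
    rw [vertsOf_translate]; exact hfin.image _
  have h2 : (vertsOf (translateEdges t S)).Nonempty := by
    rw [vertsOf_translate]; exact hne.image _
  refine (bPt_unique h1 h2 ?_ ?_ ?_).symm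
  · rw [vertsOf_translate]; exact ⟨bPt S, bPt_mem hfin hne, rfl⟩
  · intro p hp
    rw [vertsOf_translate] at hp
    obtain ⟨q, hq, rfl⟩ := hp
    have := bPt_minx hfin q hq
    simp only [Prod.fst_add]
    omega
  · intro p hp hpx
    rw [vertsOf_translate] at hp
    obtain ⟨q, hq, rfl⟩ := hp
    simp only [Prod.fst_add] at hpx
    have hq1 : q.1 = (bPt S).1 := by omega
    have := bPt_miny hfin q hq hq1
    simp only [Prod.snd_add]
    omega

end ExtremalPts

lemma aPt_edges {L : ℕ} {S : Set (Sym2 (ℤ × ℤ))} (h : IsSAP L S) :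
    s(aPt S, ((aPt S).1, (aPt S).2 - 1)) ∈ S ∧ Even ((aPt S).1 + (aPt S).2 - 1) ∧
      s(aPt S, ((aPt S).1 - 1, (aPt S).2)) ∈ S :=
  topright_edges h (aPt_mem (sap_verts_finite h) (sap_verts_nonempty h))
    (aPt_maxx (sap_verts_finite h)) (aPt_maxy (sap_verts_finite h))

lemma bPt_edges {L : ℕ} {S : Set (Sym2 (ℤ × ℤ))} (h : IsSAP L S) :
    s(bPt S, ((bPt S).1, (bPt S).2 + 1)) ∈ S ∧ Even ((bPt S).1 + (bPt S).2) ∧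
      s(bPt S, ((bPt S).1 + 1, (bPt S).2)) ∈ S :=
  botleft_edges h (bPt_mem (sap_verts_finite h) (sap_verts_nonempty h))
    (bPt_minx (sap_verts_finite h)) (bPt_miny (sap_verts_finite h))

noncomputable def normA (S : Set (Sym2 (ℤ × ℤ))) : Set (Sym2 (ℤ × ℤ)) :=
  translateEdges (((1 : ℤ), (0 : ℤ)) - aPt S) S

noncomputable def normB (S : Set (Sym2 (ℤ × ℤ))) : Set (Sym2 (ℤ × ℤ)) :=
  translateEdges (((1 : ℤ), (-1 : ℤ)) - bPt S) S

lemma normA_isSAP {L : ℕ} {S : Set (Sym2 (ℤ × ℤ))} (h : IsSAP L S) : IsSAP L (normA S) := by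
  apply isSAP_translate h
  have hpar := (aPt_edges h).2.1
  rw [Int.even_iff] at hpar ⊢
  simp only [Prod.fst_sub, Prod.snd_sub]
  omega

lemma normB_isSAP {L : ℕ} {S : Set (Sym2 (ℤ × ℤ))} (h : IsSAP L S) : IsSAP L (normB S) := by
  apply isSAP_translate h
  have hpar := (bPt_edges h).2.1
  rw [Int.even_iff] at hpar ⊢
  simp only [Prod.fst_sub, Prod.snd_sub]
  omega

lemma aPt_normA {L : ℕ} {S : Set (Sym2 (ℤ × ℤ))} (h : IsSAP L S) :
    aPt (normA S) = ((1 : ℤ), (0 : ℤ)) := by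
  rw [normA, aPt_translate (sap_verts_finite h) (sap_verts_nonempty h)]
  ring

lemma bPt_normB {L : ℕ} {S : Set (Sym2 (ℤ × ℤ))} (h : IsSAP L S) :
    bPt (normB S) = ((1 : ℤ), (-1 : ℤ)) := by
  rw [normB, bPt_translate (sap_verts_finite h) (sap_verts_nonempty h)]
  ring

lemma normA_translate {L : ℕ} {S : Set (Sym2 (ℤ × ℤ))} (h : IsSAP L S) (t : ℤ × ℤ) :
    normA (translateEdges t S) = normA S := by
  rw [normA, aPt_translate (sap_verts_finite h) (sap_verts_nonempty h),
    translateEdges_comp, normA]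
  congr 1
  ring

lemma normB_translate {L : ℕ} {S : Set (Sym2 (ℤ × ℤ))} (h : IsSAP L S) (t : ℤ × ℤ) :
    normB (translateEdges t S) = normB S := by
  rw [normB, bPt_translate (sap_verts_finite h) (sap_verts_nonempty h),
    translateEdges_comp, normB]
  congr 1
  ring

lemma hex_support_bound {u v : ℤ × ℤ} (w : HexLattice.Walk u v) :
    ∀ p ∈ w.support, ((p.1 - u.1).natAbs + (p.2 - u.2).natAbs : ℕ) ≤ w.length := by
  induction w with
  | nil =>
      intro p hp
      simp only [SimpleGraph.Walk.support_nil, List.mem_singleton] at hp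
      subst hp
      simp
  | cons h w ih =>
      intro p hp
      rw [SimpleGraph.Walk.support_cons] at hp
      rcases List.mem_cons.1 hp with rfl | hp
      · simp
      · have h1 := ih p hp
        rw [SimpleGraph.Walk.length_cons]
        rcases hex_adj_cases h with he | he | ⟨he, -⟩ | ⟨he, -⟩ <;>
          (subst he; dsimp only at h1; omega)

lemma sap_verts_diam {L : ℕ} {S : Set (Sym2 (ℤ × ℤ))} (h : IsSAP L S) :
    ∀ p ∈ vertsOf S, ∀ q ∈ vertsOf S,
      ((p.1 - q.1).natAbs + (p.2 - q.2).natAbs : ℕ) ≤ 2 * L := by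
  obtain ⟨v, w, hc, hl, rfl⟩ := h
  intro p hp q hq
  rw [verts_eq_support hc hl] at hp hq
  have h1 := hex_support_bound w p hp
  have h2 := hex_support_bound w q hq
  rw [hl] at h1 h2
  omega

lemma quot_finite (L : ℕ) :
    Finite (Quot (fun S S' : {S // IsSAP L S} => ∃ t : ℤ × ℤ, translateEdges t S.1 = S'.1)) := by
  classical
  set box : Set (ℤ × ℤ) :=
    {p : ℤ × ℤ | (p.1 - 1).natAbs ≤ 2 * L ∧ p.2.natAbs ≤ 2 * L} with hbox
  have hboxfin : box.Finite := by
    apply (Set.Finite.prod (Set.finite_Icc (1 - 2 * L : ℤ) (1 + 2 * L))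
      (Set.finite_Icc (-(2 * L) : ℤ) (2 * L))).subset
    rintro ⟨x, y⟩ ⟨h1, h2⟩
    simp only [Set.mem_prod, Set.mem_Icc]
    constructor <;> omega
  set E₀ : Set (Sym2 (ℤ × ℤ)) := {x | ∀ p ∈ x, p ∈ box} with hE₀
  have hE₀fin : E₀.Finite := by
    apply ((hboxfin.prod hboxfin).image (fun z : (ℤ × ℤ) × (ℤ × ℤ) => s(z.1, z.2))).subset
    intro x hx
    induction x with
    | _ a b =>
        exact ⟨(a, b), ⟨hx a (by simp), hx b (by simp)⟩, rfl⟩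
  have hsub : ({T | T ⊆ E₀} : Set (Set (Sym2 (ℤ × ℤ)))).Finite := hE₀fin.finite_subsets
  -- the normalisation map
  have key : ∀ S : {S // IsSAP L S}, normA S.1 ∈ {T | T ⊆ E₀} := by
    rintro ⟨S, hS⟩
    intro x hx
    have hSAP : IsSAP L (normA S) := normA_isSAP hS
    intro p hp
    have hpv : p ∈ vertsOf (normA S) := ⟨x, hx, hp⟩
    have hone : ((1 : ℤ), (0 : ℤ)) ∈ vertsOf (normA S) := by
      rw [← aPt_normA hS]
      exact aPt_mem (sap_verts_finite hSAP) (sap_verts_nonempty hSAP)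
    have := sap_verts_diam hSAP p hpv _ hone
    simp only [hbox, Set.mem_setOf_eq]
    constructor <;> omega
  haveI := hsub.to_subtype
  have hresp : ∀ a b : {S // IsSAP L S}, (∃ t : ℤ × ℤ, translateEdges t a.1 = b.1) →
      (⟨normA a.1, key a⟩ : {T | T ⊆ E₀}) = ⟨normA b.1, key b⟩ := by
    rintro a b ⟨t, ht⟩
    apply Subtype.ext
    show normA a.1 = normA b.1
    rw [← ht]
    exact (normA_translate a.2 t).symm
  apply Finite.of_injective (Quot.lift (fun S : {S // IsSAP L S} =>
    (⟨normA S.1, key S⟩ : {T | T ⊆ E₀})) hresp)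
  intro c₁ c₂ hF
  induction c₁ using Quot.ind with
  | _ a =>
    induction c₂ using Quot.ind with
    | _ b =>
      apply Quot.sound
      have hab : normA a.1 = normA b.1 := congrArg Subtype.val hF
      have e1 : translateEdges (aPt b.1 - (1, 0)) (normA b.1) = b.1 := by
        rw [normA, translateEdges_comp,
          show ((1 : ℤ), (0 : ℤ)) - aPt b.1 + (aPt b.1 - (1, 0)) = 0 by ring,
          translateEdges_zero]
      refine ⟨((1, 0) - aPt a.1) + (aPt b.1 - (1, 0)), ?_⟩
      rw [← translateEdges_comp]
      have e2 : translateEdges ((1, 0) - aPt a.1) a.1 = normA b.1 := hab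
      rw [e2, e1]

lemma sap_not_diag {L : ℕ} {S : Set (Sym2 (ℤ × ℤ))} (h : IsSAP L S) {x : Sym2 (ℤ × ℤ)}
    (hx : x ∈ S) : ¬x.IsDiag := by
  obtain ⟨v, w, hc, hl, rfl⟩ := h
  exact HexLattice.not_isDiag_of_mem_edgeSet (w.edges_subset_edgeSet hx)

lemma mem_vertsOf {S : Set (Sym2 (ℤ × ℤ))} {x : Sym2 (ℤ × ℤ)} {p : ℤ × ℤ}
    (hx : x ∈ S) (hp : p ∈ x) : p ∈ vertsOf S := ⟨x, hx, hp⟩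

/-- An edge of a SAP with both endpoints in the two-element set `{c, d}` is `s(c,d)`. -/
lemma sap_edge_eq {L : ℕ} {S : Set (Sym2 (ℤ × ℤ))} (h : IsSAP L S) {x : Sym2 (ℤ × ℤ)}
    (hx : x ∈ S) {c d : ℤ × ℤ} (hcd : ∀ p ∈ x, p = c ∨ p = d) : x = s(c, d) := by
  have hnd := sap_not_diag h hx
  induction x with
  | _ a b =>
      have ha := hcd a (by simp)
      have hb := hcd b (by simp)
      have hab : a ≠ b := by simpa using hnd
      rcases ha with rfl | rfl <;> rcases hb with rfl | rfl
      · exact absurd rfl hab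
      · rfl
      · exact Sym2.eq_swap
      · exact absurd rfl hab

/-- The junction edge above the point `c`. -/
def eJ (c : ℤ × ℤ) : Sym2 (ℤ × ℤ) := s(c, (c.1, c.2 + 1))

/-- Validity facts for a junction decomposition. -/
lemma decomp_facts {L M : ℕ} {A B : Set (Sym2 (ℤ × ℤ))} {c : ℤ × ℤ}
    (hA : IsSAP L A) (hB : IsSAP M B)
    (haA : aPt A = (c.1, c.2 + 1)) (hbB : bPt B = c) :
    eJ c ∈ A ∧ eJ c ∈ B ∧
    (∀ p ∈ vertsOf A, p.1 ≤ c.1 ∧ (p.1 = c.1 → p.2 ≤ c.2 + 1)) ∧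
    (∀ p ∈ vertsOf B, c.1 ≤ p.1 ∧ (p.1 = c.1 → c.2 ≤ p.2)) ∧
    s(c, (c.1 + 1, c.2)) ∈ B ∧ s((c.1, c.2 + 1), (c.1 - 1, c.2 + 1)) ∈ A ∧
    Even (c.1 + c.2) := by
  have h1 := aPt_edges hA
  have h2 := bPt_edges hB
  rw [haA] at h1
  rw [hbB] at h2
  simp only [] at h1 h2
  refine ⟨?_, ?_, ?_, ?_, ?_, ?_, ?_⟩
  · have := h1.1
    rw [show ((c.1, c.2 + 1).1, (c.1, c.2 + 1).2 - 1) = c by simp] at this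
    rw [eJ, Sym2.eq_swap]
    exact this
  · exact h2.1
  · intro p hp
    constructor
    · have := aPt_maxx (sap_verts_finite hA) p hp
      rw [haA] at this
      exact this
    · intro hpx
      have := aPt_maxy (sap_verts_finite hA) p hp (by rw [haA]; exact hpx)
      rw [haA] at this
      exact this
  · intro p hp
    constructor
    · have := bPt_minx (sap_verts_finite hB) p hp
      rw [hbB] at this
      exact this
    · intro hpx
      have := bPt_miny (sap_verts_finite hB) p hp (by rw [hbB]; exact hpx)
      rw [hbB] at this
      exact this
  · exact h2.2.2
  · have := h1.2.2
    rw [show ((c.1, c.2 + 1).1 - 1, (c.1, c.2 + 1).2) = (c.1 - 1, c.2 + 1) by simp] at this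
    exact this
  · exact h2.2.1

lemma sym2_exists_mem (x : Sym2 (ℤ × ℤ)) : ∃ p, p ∈ x := x.ind (fun a b => ⟨a, by simp⟩)

/-- Two junction decompositions of the same polygon cannot have junctions in
different columns. -/
lemma decomp_col_lt {L M : ℕ} {R A B A' B' : Set (Sym2 (ℤ × ℤ))} {c c' : ℤ × ℤ}
    (hA : IsSAP L A) (hB : IsSAP M B) (hA' : IsSAP L A') (hB' : IsSAP M B')
    (haA : aPt A = (c.1, c.2 + 1)) (hbB : bPt B = c)
    (haA' : aPt A' = (c'.1, c'.2 + 1)) (hbB' : bPt B' = c')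
    (hR : R = (A ∪ B) \ {eJ c}) (hR' : R = (A' ∪ B') \ {eJ c'})
    (hlt : c.1 < c'.1) : False := by
  obtain ⟨heA, heB, hAv, hBv, hBr, hAl, hpar⟩ := decomp_facts hA hB haA hbB
  obtain ⟨heA', heB', hAv', hBv', hBr', hAl', hpar'⟩ := decomp_facts hA' hB' haA' hbB'
  have hsubR : A \ {eJ c} ⊆ R := by
    intro x hx
    rw [hR]
    exact ⟨Or.inl hx.1, hx.2⟩
  have step0 : ∀ x ∈ R, x ∈ A' ∨ x ∈ B' := by
    intro x hx
    rw [hR'] at hx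
    exact hx.1
  have hnotB' : ∀ x ∈ R, (∃ p ∈ x, p.1 ≤ c.1) → x ∈ A' := by
    intro x hx ⟨p, hpx, hple⟩
    rcases step0 x hx with h | h
    · exact h
    · exfalso
      have := (hBv' p (mem_vertsOf h hpx)).1
      omega
  have step1 : A \ {eJ c} ⊆ A' := by
    intro x hx
    apply hnotB' x (hsubR hx)
    obtain ⟨p, hp⟩ := sym2_exists_mem x
    exact ⟨p, hp, (hAv p (mem_vertsOf hx.1 hp)).1⟩
  -- the horizontal edge to the right of c, in B
  have hh0ne : s(c, (c.1 + 1, c.2)) ≠ eJ c := by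
    rw [eJ]
    intro hcon
    rw [Sym2.congr_right] at hcon
    have := congrArg Prod.snd hcon
    simp at this
  have hh0R : s(c, (c.1 + 1, c.2)) ∈ R := by
    rw [hR]
    exact ⟨Or.inr hBr, hh0ne⟩
  have hh0A' : s(c, (c.1 + 1, c.2)) ∈ A' := hnotB' _ hh0R ⟨c, by simp, le_refl _⟩
  have hh0A : s(c, (c.1 + 1, c.2)) ∉ A \ {eJ c} := by
    rintro ⟨hmem, -⟩
    have := (hAv (c.1 + 1, c.2) (mem_vertsOf hmem (by simp))).1
    simp at this
  have he'A' : eJ c' ∈ A' := heA'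
  have he'R : eJ c' ∉ R := by
    rw [hR']
    rintro ⟨-, hne⟩
    exact hne rfl
  have he'1 : eJ c' ∉ A \ {eJ c} := fun hmem => he'R (hsubR hmem)
  have he'2 : eJ c' ≠ s(c, (c.1 + 1, c.2)) := fun hcon => he'R (hcon ▸ hh0R)
  -- count
  have hsub : insert (eJ c') (insert s(c, (c.1 + 1, c.2)) (A \ {eJ c})) ⊆ A' := by
    intro x hx
    rcases Set.mem_insert_iff.1 hx with rfl | hx
    · exact he'A'
    · rcases Set.mem_insert_iff.1 hx with rfl | hx
      · exact hh0A'
      · exact step1 hx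
  have hfinAe : (A \ {eJ c}).Finite := (sap_finite hA).diff
  have n1 : (A \ {eJ c}).ncard = L - 1 := by
    rw [Set.ncard_diff_singleton_of_mem heA, sap_ncard hA]
  have n2 : (insert s(c, (c.1 + 1, c.2)) (A \ {eJ c})).ncard = L - 1 + 1 := by
    rw [Set.ncard_insert_of_notMem hh0A hfinAe, n1]
  have n3 : (insert (eJ c') (insert s(c, (c.1 + 1, c.2)) (A \ {eJ c}))).ncard = L - 1 + 2 := by
    rw [Set.ncard_insert_of_notMem (by
        intro hcon
        rcases Set.mem_insert_iff.1 hcon with h | h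
        · exact he'2 h
        · exact he'1 h) (hfinAe.insert _), n2]
  have hle := Set.ncard_le_ncard hsub (sap_finite hA')
  rw [n3, sap_ncard hA'] at hle
  have h3 := sap_three_le hA
  omega

/-- Two junction decompositions in the same column must have the same junction. -/
lemma decomp_same_col_lt {L M : ℕ} {R A B A' B' : Set (Sym2 (ℤ × ℤ))} {c c' : ℤ × ℤ}
    (hA : IsSAP L A) (hB : IsSAP M B) (hA' : IsSAP L A') (hB' : IsSAP M B')
    (haA : aPt A = (c.1, c.2 + 1)) (hbB : bPt B = c)
    (haA' : aPt A' = (c'.1, c'.2 + 1)) (hbB' : bPt B' = c')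
    (hR : R = (A ∪ B) \ {eJ c}) (hR' : R = (A' ∪ B') \ {eJ c'})
    (hxx : c.1 = c'.1) (hyy : c.2 < c'.2) : False := by
  obtain ⟨heA, heB, hAv, hBv, hBr, hAl, hpar⟩ := decomp_facts hA hB haA hbB
  obtain ⟨heA', heB', hAv', hBv', hBr', hAl', hpar'⟩ := decomp_facts hA' hB' haA' hbB'
  have he'R : eJ c' ∉ R := by
    rw [hR']
    rintro ⟨-, hne⟩
    exact hne rfl
  have huA' : (c'.1, c'.2 + 1) ∈ vertsOf A' := by
    rw [← haA']
    exact aPt_mem (sap_verts_finite hA') (sap_verts_nonempty hA')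
  -- (c'.1, c'.2+1) is a vertex of R
  have huR : (c'.1, c'.2 + 1) ∈ vertsOf R := by
    obtain ⟨e₁, e₂, h1, h2, hne, hm1, hm2⟩ := sap_two_edges hA' huA'
    have hex : ∃ x, x ∈ A' ∧ x ≠ eJ c' ∧ (c'.1, c'.2 + 1) ∈ x := by
      by_cases hc1 : e₁ = eJ c'
      · exact ⟨e₂, h2, by rw [← hc1]; exact hne.symm, hm2⟩
      · exact ⟨e₁, h1, hc1, hm1⟩
    obtain ⟨x, hxA', hxne, hux⟩ := hex
    refine ⟨x, ?_, hux⟩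
    rw [hR']
    exact ⟨Or.inl hxA', hxne⟩
  have huAB : (c'.1, c'.2 + 1) ∈ vertsOf A ∪ vertsOf B := by
    obtain ⟨x, hxR, hux⟩ := huR
    rw [hR] at hxR
    rcases hxR.1 with h | h
    · exact Or.inl (mem_vertsOf h hux)
    · exact Or.inr (mem_vertsOf h hux)
  have huB : (c'.1, c'.2 + 1) ∈ vertsOf B := by
    rcases huAB with h | h
    · exfalso
      have h2 := (hAv _ h).2 (by simp; omega)
      simp at h2
      omega
    · exact h
  have humin : ∀ p ∈ vertsOf B, ((c'.1 : ℤ), c'.2 + 1).1 ≤ p.1 := by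
    intro p hp
    have := (hBv p hp).1
    simp
    omega
  rcases vertical_at_leftmost hB huB humin with ⟨hup, hev⟩ | ⟨hdn, hev⟩
  · -- upward vertical: impossible by parity
    simp only [] at hev
    rw [Int.even_iff] at hev hpar'
    omega
  · -- downward vertical is exactly eJ c'
    have hd : (((c'.1 : ℤ), c'.2 + 1).1, ((c'.1 : ℤ), c'.2 + 1).2 - 1) = c' := by
      simp
    rw [hd] at hdn
    have he'B : eJ c' ∈ B := by
      rw [eJ, Sym2.eq_swap]
      exact hdn
    have he'ne : eJ c' ≠ eJ c := by
      rw [eJ, eJ]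
      intro hcon
      rcases Sym2.eq_iff.1 hcon with ⟨h1, -⟩ | ⟨-, h2⟩
      · have := congrArg Prod.snd h1
        try simp at this
        omega
      · have := congrArg Prod.snd h2
        simp at this
        omega
    apply he'R
    rw [hR]
    exact ⟨Or.inr he'B, he'ne⟩

/-- A junction decomposition of a polygon is unique. -/
lemma decomp_unique {L M : ℕ} {R A B A' B' : Set (Sym2 (ℤ × ℤ))} {c c' : ℤ × ℤ}
    (hA : IsSAP L A) (hB : IsSAP M B) (hA' : IsSAP L A') (hB' : IsSAP M B')
    (haA : aPt A = (c.1, c.2 + 1)) (hbB : bPt B = c)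
    (haA' : aPt A' = (c'.1, c'.2 + 1)) (hbB' : bPt B' = c')
    (hR : R = (A ∪ B) \ {eJ c}) (hR' : R = (A' ∪ B') \ {eJ c'}) :
    A = A' ∧ B = B' := by
  -- the junctions agree
  have hcc : c = c' := by
    rcases lt_trichotomy c.1 c'.1 with h | h | h
    · exact absurd (decomp_col_lt hA hB hA' hB' haA hbB haA' hbB' hR hR' h) id
    · rcases lt_trichotomy c.2 c'.2 with h2 | h2 | h2
      · exact absurd (decomp_same_col_lt hA hB hA' hB' haA hbB haA' hbB' hR hR' h h2) id
      · exact Prod.ext h h2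
      · exact absurd
          (decomp_same_col_lt hA' hB' hA hB haA' hbB' haA hbB hR' hR h.symm h2) id
    · exact absurd (decomp_col_lt hA' hB' hA hB haA' hbB' haA hbB hR' hR h) id
  subst hcc
  -- characterization of the left part
  have hchar : ∀ (A₀ B₀ : Set (Sym2 (ℤ × ℤ))), IsSAP L A₀ → IsSAP M B₀ →
      aPt A₀ = (c.1, c.2 + 1) → bPt B₀ = c → R = (A₀ ∪ B₀) \ {eJ c} →
      A₀ \ {eJ c} = {x ∈ R | ∀ p ∈ x, p.1 ≤ c.1 ∧ (p.1 = c.1 → p.2 ≤ c.2 + 1)} := by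
    intro A₀ B₀ hA₀ hB₀ haA₀ hbB₀ hR₀
    obtain ⟨heA₀, heB₀, hAv₀, hBv₀, -, -, -⟩ := decomp_facts hA₀ hB₀ haA₀ hbB₀
    ext x
    constructor
    · rintro ⟨hxA, hxe⟩
      refine ⟨by rw [hR₀]; exact ⟨Or.inl hxA, hxe⟩, ?_⟩
      intro p hp
      exact hAv₀ p (mem_vertsOf hxA hp)
    · rintro ⟨hxR, hprop⟩
      have hxe : x ∉ ({eJ c} : Set (Sym2 (ℤ × ℤ))) := by
        rw [hR₀] at hxR
        exact hxR.2
      refine ⟨?_, hxe⟩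
      rw [hR₀] at hxR
      rcases hxR.1 with h | h
      · exact h
      · exfalso
        apply hxe
        have : x = s(c, (c.1, c.2 + 1)) := by
          apply sap_edge_eq hB₀ h
          intro p hp
          have h1 := hprop p hp
          have h2 := hBv₀ p (mem_vertsOf h hp)
          have hp1 : p.1 = c.1 := le_antisymm h1.1 h2.1
          have hp2 : c.2 ≤ p.2 := h2.2 hp1
          have hp3 : p.2 ≤ c.2 + 1 := h1.2 hp1
          rcases eq_or_lt_of_le hp2 with heq | hlt
          · left; exact Prod.ext hp1 heq.symm
          · right; exact Prod.ext hp1 (by omega)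
        rw [this, eJ]
        rfl
  -- the two left parts (minus the junction edge) coincide
  have hAe : A \ {eJ c} = A' \ {eJ c} := by
    rw [hchar A B hA hB haA hbB hR, hchar A' B' hA' hB' haA' hbB' hR']
  obtain ⟨heA, heB, hAv, hBv, -, -, -⟩ := decomp_facts hA hB haA hbB
  obtain ⟨heA', heB', hAv', hBv', -, -, -⟩ := decomp_facts hA' hB' haA' hbB'
  have hAA : A = A' := by
    have e1 : A = insert (eJ c) (A \ {eJ c}) := by
      rw [Set.insert_diff_singleton, Set.insert_eq_self.2 heA]
    have e2 : A' = insert (eJ c) (A' \ {eJ c}) := by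
      rw [Set.insert_diff_singleton, Set.insert_eq_self.2 heA']
    rw [e1, e2, hAe]
  refine ⟨hAA, ?_⟩
  -- B is determined as the complement
  have hcharB : ∀ (A₀ B₀ : Set (Sym2 (ℤ × ℤ))), IsSAP L A₀ → IsSAP M B₀ →
      aPt A₀ = (c.1, c.2 + 1) → bPt B₀ = c → R = (A₀ ∪ B₀) \ {eJ c} →
      B₀ \ {eJ c} = R \ (A₀ \ {eJ c}) := by
    intro A₀ B₀ hA₀ hB₀ haA₀ hbB₀ hR₀
    obtain ⟨heA₀, heB₀, hAv₀, hBv₀, -, -, -⟩ := decomp_facts hA₀ hB₀ haA₀ hbB₀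
    ext x
    constructor
    · rintro ⟨hxB, hxe⟩
      refine ⟨by rw [hR₀]; exact ⟨Or.inr hxB, hxe⟩, ?_⟩
      rintro ⟨hxA, -⟩
      apply hxe
      have : x = s(c, (c.1, c.2 + 1)) := by
        apply sap_edge_eq hB₀ hxB
        intro p hp
        have h1 := hAv₀ p (mem_vertsOf hxA hp)
        have h2 := hBv₀ p (mem_vertsOf hxB hp)
        have hp1 : p.1 = c.1 := le_antisymm h1.1 h2.1
        have hp2 : c.2 ≤ p.2 := h2.2 hp1
        have hp3 : p.2 ≤ c.2 + 1 := h1.2 hp1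
        rcases eq_or_lt_of_le hp2 with heq | hlt
        · left; exact Prod.ext hp1 heq.symm
        · right; exact Prod.ext hp1 (by omega)
      rw [this, eJ]
      rfl
    · rintro ⟨hxR, hxnA⟩
      have hxmem := hxR
      rw [hR₀] at hxmem
      have hxe : x ∉ ({eJ c} : Set (Sym2 (ℤ × ℤ))) := hxmem.2
      refine ⟨?_, hxe⟩
      rcases hxmem.1 with h | h
      · exact absurd ⟨h, hxe⟩ hxnA
      · exact h
  have hBe : B \ {eJ c} = B' \ {eJ c} := by
    rw [hcharB A B hA hB haA hbB hR, hcharB A' B' hA' hB' haA' hbB' hR', hAe]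
  have e1 : B = insert (eJ c) (B \ {eJ c}) := by
    rw [Set.insert_diff_singleton, Set.insert_eq_self.2 heB]
  have e2 : B' = insert (eJ c) (B' \ {eJ c}) := by
    rw [Set.insert_diff_singleton, Set.insert_eq_self.2 heB']
  rw [e1, e2, hBe]

lemma sap_mem_edgeSet {L : ℕ} {S : Set (Sym2 (ℤ × ℤ))} (h : IsSAP L S) {x : Sym2 (ℤ × ℤ)}
    (hx : x ∈ S) : x ∈ HexLattice.edgeSet := by
  obtain ⟨v, w, hc, hl, rfl⟩ := h
  exact w.edges_subset_edgeSet hx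

/-- Concatenating two polygons that meet the junction conditions gives a polygon. -/
lemma concat_isSAP {L M : ℕ} {A B : Set (Sym2 (ℤ × ℤ))} {c : ℤ × ℤ}
    (hA : IsSAP L A) (hB : IsSAP M B)
    (haA : aPt A = (c.1, c.2 + 1)) (hbB : bPt B = c) :
    IsSAP (L + M - 2) ((A ∪ B) \ {eJ c}) := by
  obtain ⟨heA, heB, hAv, hBv, -, -, hpar⟩ := decomp_facts hA hB haA hbB
  obtain ⟨v₁, w₁, hc₁, hl₁, hS₁⟩ := id hA
  obtain ⟨v₂, w₂, hc₂, hl₂, hS₂⟩ := id hB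
  have hadj : HexLattice.Adj c (c.1, c.2 + 1) := hex_adj_up hpar
  have he₁ : s(c, (c.1, c.2 + 1)) ∈ w₁.edges := by
    have := heA
    rw [hS₁] at this
    exact this
  have he₂ : s(c, (c.1, c.2 + 1)) ∈ w₂.edges := by
    have := heB
    rw [hS₂] at this
    exact this
  have hV : ∀ y, y ∈ w₁.support → y ∈ w₂.support → y = c ∨ y = (c.1, c.2 + 1) := by
    intro y hy₁ hy₂
    have hyA : y ∈ vertsOf A := by
      rw [hS₁, verts_eq_support hc₁ hl₁]
      exact hy₁
    have hyB : y ∈ vertsOf B := by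
      rw [hS₂, verts_eq_support hc₂ hl₂]
      exact hy₂
    have h1 := hAv y hyA
    have h2 := hBv y hyB
    have hy1 : y.1 = c.1 := le_antisymm h1.1 h2.1
    have hy2 : c.2 ≤ y.2 := h2.2 hy1
    have hy3 : y.2 ≤ c.2 + 1 := h1.2 hy1
    rcases eq_or_lt_of_le hy2 with heq | hlt
    · left; exact Prod.ext hy1 heq.symm
    · right; exact Prod.ext hy1 (by omega)
  obtain ⟨W, hWc, hWl, hWe⟩ := cycle_surgery hc₁ hc₂ hadj he₁ he₂ hV
  refine ⟨c, W, hWc, ?_, ?_⟩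
  · have h31 := hc₁.three_le_length
    have h32 := hc₂.three_le_length
    omega
  · ext x
    simp only [Set.mem_setOf_eq, Set.mem_diff, Set.mem_union, Set.mem_singleton_iff]
    rw [hWe x, hS₁, hS₂, eJ]
    tauto

/-- If a SAP and its translate are both SAPs then the translation is even. -/
lemma translate_even_of_sap {N : ℕ} {S : Set (Sym2 (ℤ × ℤ))} {t : ℤ × ℤ}
    (h : IsSAP N S) (h2 : IsSAP N (translateEdges t S)) : Even (t.1 + t.2) := by
  obtain ⟨hdown, hpar, -⟩ := aPt_edges h
  have hx' : Sym2.map (fun p => p + t) s(aPt S, ((aPt S).1, (aPt S).2 - 1)) ∈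
      translateEdges t S := ⟨_, hdown, rfl⟩
  rw [Sym2.map_pair_eq] at hx'
  have hE := sap_mem_edgeSet h2 hx'
  have hadj := HexLattice.mem_edgeSet.1 hE
  rcases hex_adj_cases hadj with he | he | ⟨he, hev⟩ | ⟨he, hev⟩ <;>
    rw [Prod.ext_iff] at he <;>
    simp only [Prod.fst_add, Prod.snd_add] at he
  · exfalso; omega
  · exfalso; omega
  · exfalso; omega
  · rw [Int.even_iff] at hev hpar ⊢
    simp only [Prod.fst_add, Prod.snd_add] at hev
    omega

lemma eJ_translate (c t : ℤ × ℤ) :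
    Sym2.map (fun p => p + t) (eJ c) = eJ (c + t) := by
  rw [eJ, eJ, Sym2.map_pair_eq]
  congr 1
  apply Prod.ext
  · show c.1 + t.1 = (c + t).1
    simp
  · show c.2 + 1 + t.2 = (c + t).2 + 1
    simp only [Prod.snd_add]
    omega

lemma normA_rel {L : ℕ} {S S' : Set (Sym2 (ℤ × ℤ))} (hS : IsSAP L S) (hS' : IsSAP L S')
    (h : normA S = normA S') : ∃ t : ℤ × ℤ, translateEdges t S = S' := by
  refine ⟨(((1 : ℤ), (0 : ℤ)) - aPt S) + (aPt S' - (1, 0)), ?_⟩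
  rw [← translateEdges_comp]
  have e2 : translateEdges (((1 : ℤ), (0 : ℤ)) - aPt S) S = normA S' := h
  rw [e2, normA, translateEdges_comp,
    show ((1 : ℤ), (0 : ℤ)) - aPt S' + (aPt S' - (1, 0)) = 0 by ring, translateEdges_zero]

lemma normB_rel {L : ℕ} {S S' : Set (Sym2 (ℤ × ℤ))} (hS : IsSAP L S) (hS' : IsSAP L S')
    (h : normB S = normB S') : ∃ t : ℤ × ℤ, translateEdges t S = S' := by
  refine ⟨(((1 : ℤ), (-1 : ℤ)) - bPt S) + (bPt S' - (1, -1)), ?_⟩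
  rw [← translateEdges_comp]
  have e2 : translateEdges (((1 : ℤ), (-1 : ℤ)) - bPt S) S = normB S' := h
  rw [e2, normB, translateEdges_comp,
    show ((1 : ℤ), (-1 : ℤ)) - bPt S' + (bPt S' - (1, -1)) = 0 by ring, translateEdges_zero]

lemma aPt_normA' {L : ℕ} {S : Set (Sym2 (ℤ × ℤ))} (h : IsSAP L S) :
    aPt (normA S) = ((((1 : ℤ), (-1 : ℤ)) : ℤ × ℤ).1, (((1 : ℤ), (-1 : ℤ)) : ℤ × ℤ).2 + 1) := by
  rw [aPt_normA h]
  apply Prod.ext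
  · rfl
  · norm_num

/-- The concatenation of two normalised polygons. -/
noncomputable def concatSAP {L M : ℕ} (S₁ : {S // IsSAP L S}) (S₂ : {S // IsSAP M S}) :
    {S // IsSAP (L + M - 2) S} :=
  ⟨(normA S₁.1 ∪ normB S₂.1) \ {eJ (1, -1)},
    concat_isSAP (normA_isSAP S₁.2) (normB_isSAP S₂.2) (aPt_normA' S₁.2) (bPt_normB S₂.2)⟩

noncomputable def concatQ (L M : ℕ) :
    ((Quot fun S S' : {S // IsSAP L S} => ∃ t : ℤ × ℤ, translateEdges t S.1 = S'.1) ×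
      (Quot fun S S' : {S // IsSAP M S} => ∃ t : ℤ × ℤ, translateEdges t S.1 = S'.1)) →
    Quot fun S S' : {S // IsSAP (L + M - 2) S} => ∃ t : ℤ × ℤ, translateEdges t S.1 = S'.1 :=
  fun q =>
    Quot.lift₂ (fun S₁ S₂ => Quot.mk _ (concatSAP S₁ S₂))
      (by
        rintro S₁ S₂ S₂' ⟨t, ht⟩
        have hv : concatSAP S₁ S₂ = concatSAP S₁ S₂' := by
          apply Subtype.ext
          show (normA S₁.1 ∪ normB S₂.1) \ {eJ (1, -1)} =
            (normA S₁.1 ∪ normB S₂'.1) \ {eJ (1, -1)}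
          have hnb : normB S₂'.1 = normB S₂.1 := by
            rw [← ht]
            exact normB_translate S₂.2 t
          rw [hnb]
        show Quot.mk _ (concatSAP S₁ S₂) = Quot.mk _ (concatSAP S₁ S₂')
        rw [hv])
      (by
        rintro S₁ S₁' S₂ ⟨t, ht⟩
        have hv : concatSAP S₁ S₂ = concatSAP S₁' S₂ := by
          apply Subtype.ext
          show (normA S₁.1 ∪ normB S₂.1) \ {eJ (1, -1)} =
            (normA S₁'.1 ∪ normB S₂.1) \ {eJ (1, -1)}
          have hna : normA S₁'.1 = normA S₁.1 := by
            rw [← ht]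
            exact normA_translate S₁.2 t
          rw [hna]
        show Quot.mk _ (concatSAP S₁ S₂) = Quot.mk _ (concatSAP S₁' S₂)
        rw [hv])
      q.1 q.2

lemma concatQ_injective (L M : ℕ) : Function.Injective (concatQ L M) := by
  rintro ⟨q1, q2⟩ ⟨q1', q2'⟩ h
  induction q1 using Quot.ind with
  | _ S₁ =>
  induction q2 using Quot.ind with
  | _ S₂ =>
  induction q1' using Quot.ind with
  | _ S₁' =>
  induction q2' using Quot.ind with
  | _ S₂' =>
  obtain ⟨t, ht⟩ := rel_of_eqvGen (Quot.eqvGen_exact h)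
  -- names
  have hA₁ : IsSAP L (normA S₁.1) := normA_isSAP S₁.2
  have hB₁ : IsSAP M (normB S₂.1) := normB_isSAP S₂.2
  have hA₂ : IsSAP L (normA S₁'.1) := normA_isSAP S₁'.2
  have hB₂ : IsSAP M (normB S₂'.1) := normB_isSAP S₂'.2
  have hR : (concatSAP S₁ S₂).1 = (normA S₁.1 ∪ normB S₂.1) \ {eJ (1, -1)} := rfl
  have hR' : (concatSAP S₁' S₂').1 = (normA S₁'.1 ∪ normB S₂'.1) \ {eJ (1, -1)} := rfl
  have hteven : Even (t.1 + t.2) := by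
    apply translate_even_of_sap (concatSAP S₁ S₂).2
    rw [ht]
    exact (concatSAP S₁' S₂').2
  have htr : translateEdges t ((normA S₁.1 ∪ normB S₂.1) \ {eJ (1, -1)}) =
      (translateEdges t (normA S₁.1) ∪ translateEdges t (normB S₂.1)) \
        {eJ ((1, -1) + t)} := by
    rw [translateEdges_diff, translateEdges_union]
    congr 1
    show Sym2.map (fun p => p + t) '' {eJ (1, -1)} = _
    rw [Set.image_singleton, eJ_translate]
  have hRR : (concatSAP S₁' S₂').1 =
      (translateEdges t (normA S₁.1) ∪ translateEdges t (normB S₂.1)) \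
        {eJ ((1, -1) + t)} := by
    rw [hR', ← htr]
    exact ht.symm ▸ rfl
  have haA : aPt (translateEdges t (normA S₁.1)) =
      ((((1 : ℤ), (-1 : ℤ)) + t).1, (((1 : ℤ), (-1 : ℤ)) + t).2 + 1) := by
    rw [aPt_translate (sap_verts_finite hA₁) (sap_verts_nonempty hA₁), aPt_normA S₁.2]
    apply Prod.ext
    · simp
    · show 0 + t.2 = (-1) + t.2 + 1
      omega
  have hbB : bPt (translateEdges t (normB S₂.1)) = (1, -1) + t := by
    rw [bPt_translate (sap_verts_finite hB₁) (sap_verts_nonempty hB₁), bPt_normB S₂.2]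
  have hkey := decomp_unique (isSAP_translate hA₁ hteven) (isSAP_translate hB₁ hteven)
    hA₂ hB₂ haA hbB (aPt_normA' S₁'.2) (bPt_normB S₂'.2) hRR hR'
  -- deduce t = 0
  have ht0 : t = 0 := by
    have e1 : aPt (translateEdges t (normA S₁.1)) = (1, 0) + t := by
      rw [aPt_translate (sap_verts_finite hA₁) (sap_verts_nonempty hA₁), aPt_normA S₁.2]
    rw [hkey.1, aPt_normA S₁'.2] at e1
    have e2 := congrArg Prod.fst e1
    have e3 := congrArg Prod.snd e1
    simp at e2 e3
    apply Prod.ext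
    · rw [e2]; rfl
    · rw [← e3]; rfl
  simp only [ht0, translateEdges_zero] at hkey
  have r1 : ∃ s : ℤ × ℤ, translateEdges s S₁.1 = S₁'.1 := normA_rel S₁.2 S₁'.2 hkey.1
  have r2 : ∃ s : ℤ × ℤ, translateEdges s S₂.1 = S₂'.1 := normB_rel S₂.2 S₂'.2 hkey.2
  have q1eq : (Quot.mk _ S₁ :
      Quot fun S S' : {S // IsSAP L S} => ∃ t : ℤ × ℤ, translateEdges t S.1 = S'.1) =
      Quot.mk _ S₁' := Quot.sound r1
  have q2eq : (Quot.mk _ S₂ :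
      Quot fun S S' : {S // IsSAP M S} => ∃ t : ℤ × ℤ, translateEdges t S.1 = S'.1) =
      Quot.mk _ S₂' := Quot.sound r2
  rw [Prod.ext_iff]
  exact ⟨q1eq, q2eq⟩

end HexSAP


/-- Supermultiplicativity of hexagonal-lattice self-avoiding polygons:
`p_{L+M-2} ≥ p_L · p_M`. -/
theorem hexSAP_supermultiplicative (L M : ℕ) :
    hexSAPCount L * hexSAPCount M ≤ hexSAPCount (L + M - 2) := by
  classical
  haveI h1 := HexSAP.quot_finite L
  haveI h2 := HexSAP.quot_finite M
  haveI h3 := HexSAP.quot_finite (L + M - 2)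
  show Nat.card _ * Nat.card _ ≤ Nat.card _
  rw [← Nat.card_prod]
  exact Nat.card_le_card_of_injective _ (HexSAP.concatQ_injective L M)
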